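/- Suppose ς : Γ → ℝ is a C² function on a finite metric graph (finitely many edges, possibly some infinite), satisfying −ε²ς'' = (λ−λ₀)ς on each edge with λ < λ₀, decaying at infinity on infinite edges, and at each vertex each component of the restriction vector ς^{(v)} satisfies either ς_j(0) = 0 or ς_j'(0) = 0 (in a suitable orthogonal coordinate frame), and at degree-1 vertices a Robin condition ες' + aς = 0 with a ≥ 0. Then ς ≡ 0. (Energy identity: 0 = ∫_Γ [ε²(ς')² − (λ−λ₀)ς²] minus non-negative boundary terms forces ς = 0.) -/

import Mathlib

open Set Filter

lemma monoIcc {f f' : ℝ → ℝ} {a b : ℝ}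
    (hd : ∀ t ∈ Icc a b, HasDerivAt f (f' t) t)
    (h0 : ∀ t ∈ Icc a b, 0 ≤ f' t) : MonotoneOn f (Icc a b) := by
  apply monotoneOn_of_deriv_nonneg (convex_Icc a b)
  · exact fun t ht => (hd t ht).continuousAt.continuousWithinAt
  · intro t ht
    rw [interior_Icc] at ht
    exact (hd t (Ioo_subset_Icc_self ht)).differentiableAt.differentiableWithinAt
  · intro t ht
    rw [interior_Icc] at ht
    rw [(hd t (Ioo_subset_Icc_self ht)).deriv]
    exact h0 t (Ioo_subset_Icc_self ht)

lemma constIcc {f f' : ℝ → ℝ} {a b : ℝ}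
    (hd : ∀ t ∈ Icc a b, HasDerivAt f (f' t) t)
    (h0 : ∀ t ∈ Icc a b, f' t = 0) : ∀ t ∈ Icc a b, f t = f a := by
  intro t ht
  have ha : a ∈ Icc a b := ⟨le_refl a, ht.1.trans ht.2⟩
  have hmono := monoIcc hd (fun s hs => le_of_eq (h0 s hs).symm)
  have hanti : MonotoneOn (fun s => -f s) (Icc a b) :=
    monoIcc (fun s hs => (hd s hs).neg) (fun s hs => by simp [h0 s hs])
  have h1 := hmono ha ht ht.1
  have h2 := hanti ha ht ht.1
  simp only [neg_le_neg_iff] at h2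
  linarith

lemma robin_sign0 {ε a v d : ℝ} (hε : 0 < ε) (ha : 0 ≤ a)
    (h : ε * (-d) + a * v = 0) : 0 ≤ v * d := by
  have h1 : ε * d = a * v := by linarith
  have h2 : ε * (v * d) = a * v ^ 2 := by
    calc ε * (v * d) = v * (ε * d) := by ring
    _ = v * (a * v) := by rw [h1]
    _ = a * v ^ 2 := by ring
  nlinarith [mul_nonneg ha (sq_nonneg v)]

lemma robin_signL {ε a v d : ℝ} (hε : 0 < ε) (ha : 0 ≤ a)
    (h : ε * d + a * v = 0) : v * d ≤ 0 := by
  have h1 : ε * d = -(a * v) := by linarith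
  have h2 : ε * (v * d) = -(a * v ^ 2) := by
    calc ε * (v * d) = v * (ε * d) := by ring
    _ = v * (-(a * v)) := by rw [h1]
    _ = -(a * v ^ 2) := by ring
  nlinarith [mul_nonneg ha (sq_nonneg v)]

lemma boundedEdge {k L : ℝ} (hk : 0 < k) (hL : 0 < L) {u u' : ℝ → ℝ}
    (hd1 : ∀ t ∈ Icc 0 L, HasDerivAt u (u' t) t)
    (hd2 : ∀ t ∈ Icc 0 L, HasDerivAt u' (k * u t) t)
    (h0 : 0 ≤ u 0 * u' 0) (hLc : u L * u' L ≤ 0) :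
    ∀ t ∈ Icc 0 L, u t = 0 := by
  set P : ℝ → ℝ := fun t => u t * u' t with hPdef
  have hP : ∀ t ∈ Icc 0 L, HasDerivAt P (u' t ^ 2 + k * u t ^ 2) t := by
    intro t ht
    have : HasDerivAt (fun s => u s * u' s) _ t := (hd1 t ht).fun_mul (hd2 t ht)
    convert this using 1
    ring
  have hmono : MonotoneOn P (Icc 0 L) :=
    monoIcc hP (fun t ht => by positivity)
  have h0m : (0 : ℝ) ∈ Icc 0 L := ⟨le_refl 0, hL.le⟩
  have hLm : L ∈ Icc 0 L := ⟨hL.le, le_refl L⟩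
  have hPz : ∀ t ∈ Icc 0 L, P t = 0 := by
    intro t ht
    have h1 : P t ≤ P L := hmono ht hLm ht.2
    have h2 : P 0 ≤ P t := hmono h0m ht ht.1
    simp only [hPdef] at *
    linarith
  -- interior points: derivative of the constant P is zero, forcing u = 0
  have hInt : ∀ t ∈ Ioo 0 L, u t = 0 := by
    intro t ht
    have hev : P =ᶠ[nhds t] (fun _ => (0 : ℝ)) := by
      filter_upwards [isOpen_Ioo.mem_nhds ht] with s hs
      exact hPz s (Ioo_subset_Icc_self hs)
    have hz : HasDerivAt P 0 t := (hasDerivAt_const t (0 : ℝ)).congr_of_eventuallyEq hev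
    have huniq := (hP t (Ioo_subset_Icc_self ht)).unique hz
    have h2 : k * u t ^ 2 ≤ 0 := by nlinarith [sq_nonneg (u' t)]
    have h3 : u t ^ 2 ≤ 0 := by
      by_contra h
      push_neg at h
      nlinarith [mul_pos hk h]
    have h4 : u t ^ 2 = 0 := le_antisymm h3 (sq_nonneg _)
    exact pow_eq_zero_iff two_ne_zero |>.mp h4
  -- u^2 has derivative 2 P = 0 on Icc, hence is constant; interior value is 0
  have hgz : ∀ t ∈ Icc 0 L, u t ^ 2 = u 0 ^ 2 := by
    apply constIcc (f' := fun t => 2 * P t)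
    · intro t ht
      have : HasDerivAt (fun s => u s * u s) _ t := (hd1 t ht).fun_mul (hd1 t ht)
      have h2 : HasDerivAt (fun s => u s ^ 2) (u' t * u t + u t * u' t) t := by
        convert this using 2; ring
      convert h2 using 1
      simp only [hPdef]; ring
    · intro t ht
      rw [hPz t ht]; ring
  have hmid : u (L / 2) = 0 := hInt (L / 2) ⟨by linarith, by linarith⟩
  have hmem : (L / 2) ∈ Icc 0 L := ⟨by linarith, by linarith⟩
  have h02 : u 0 ^ 2 = 0 := by
    have := hgz (L / 2) hmem
    rw [hmid] at this
    nlinarith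
  intro t ht
  have h5 : u t ^ 2 = 0 := by rw [hgz t ht, h02]
  exact pow_eq_zero_iff two_ne_zero |>.mp h5

lemma infEdge {k : ℝ} (hk : 0 < k) {w w' : ℝ → ℝ}
    (hd1 : ∀ t ∈ Ici (0:ℝ), HasDerivAt w (w' t) t)
    (hd2 : ∀ t ∈ Ici (0:ℝ), HasDerivAt w' (k * w t) t)
    (hdecay : Tendsto w atTop (nhds 0))
    (h0 : 0 ≤ w 0 * w' 0) :
    ∀ t ∈ Ici (0:ℝ), w t = 0 := by
  set Q : ℝ → ℝ := fun t => w' t * w' t - k * (w t * w t) with hQdef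
  have hQ : ∀ t ∈ Ici (0:ℝ), HasDerivAt Q 0 t := by
    intro t ht
    have h1 := (hd2 t ht).fun_mul (hd2 t ht)
    have h2 := ((hd1 t ht).fun_mul (hd1 t ht)).const_mul k
    have h3 : HasDerivAt (fun s => w' s * w' s - k * (w s * w s)) _ t := h1.fun_sub h2
    convert h3 using 1
    ring
  have hQconst : ∀ t ∈ Ici (0:ℝ), Q t = Q 0 := by
    intro t ht
    exact constIcc (f' := fun _ => (0:ℝ))
      (fun s hs => hQ s hs.1) (fun s _ => rfl) t ⟨ht, le_refl t⟩
  set c := Q 0 with hcdef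
  have hwsq : Tendsto (fun t => w t * w t) atTop (nhds 0) := by
    simpa using hdecay.mul hdecay
  -- c ≥ 0
  have hcge : 0 ≤ c := by
    by_contra hc
    push_neg at hc
    have hkw : Tendsto (fun t => k * (w t * w t)) atTop (nhds 0) := by
      simpa using hwsq.const_mul k
    have hev : ∀ᶠ t in atTop, k * (w t * w t) < -c :=
      hkw.eventually_lt_const (by linarith)
    obtain ⟨t, ht1, ht2⟩ := (hev.and (eventually_ge_atTop (0:ℝ))).exists
    have hq := hQconst t ht2
    simp only [hQdef] at hq
    nlinarith [mul_self_nonneg (w' t)]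
  -- P and its derivative
  set P : ℝ → ℝ := fun t => w t * w' t with hPdef
  have hPd : ∀ t ∈ Ici (0:ℝ), HasDerivAt P (w' t * w' t + k * (w t * w t)) t := by
    intro t ht
    have h1 : HasDerivAt (fun s => w s * w' s) _ t := (hd1 t ht).fun_mul (hd2 t ht)
    convert h1 using 1
    ring
  -- c ≤ 0
  have hcle : c ≤ 0 := by
    by_contra hc
    push_neg at hc
    -- h(t) = P t - c*t is monotone on [0,T]
    have hmono : ∀ T ∈ Ici (0:ℝ), P 0 ≤ P T - c * T := by
      intro T hT
      have hm : MonotoneOn (fun t => P t - c * t) (Icc 0 T) := by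
        apply monoIcc (f' := fun t => (w' t * w' t + k * (w t * w t)) - c)
        · intro t htm
          have hsub : t ∈ Ici (0:ℝ) := htm.1
          have : HasDerivAt (fun s => P s - c * s) _ t := (hPd t hsub).fun_sub ((hasDerivAt_id t).const_mul c)
          convert this using 1
          ring
        · intro t htm
          have hq := hQconst t htm.1
          simp only [hQdef] at hq
          nlinarith [mul_nonneg hk.le (mul_self_nonneg (w t))]
      have := hm ⟨le_refl 0, hT⟩ ⟨hT, le_refl T⟩ hT
      simpa using this
    have h1 : Tendsto (fun T => (w T * w T) * (c + k * (w T * w T))) atTop (nhds 0) := by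
      have := hwsq.mul ((hwsq.const_mul k).const_add c)
      simpa using this
    have hPsq : Tendsto (fun T => P T * P T) atTop (nhds 0) := by
      apply h1.congr'
      filter_upwards [eventually_ge_atTop (0:ℝ)] with T hT
      have hq := hQconst T hT
      simp only [hQdef] at hq
      simp only [hPdef]
      linear_combination (-(w T * w T)) * hq
    obtain ⟨T, ⟨hT2, hT1⟩, hT0⟩ :=
      (((hPsq.eventually_lt_const (one_pos)).and
        (eventually_gt_atTop ((1 - P 0) / c))).and (eventually_ge_atTop (0:ℝ))).exists
    have hcT : 1 - P 0 < c * T := by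
      rw [div_lt_iff₀ hc] at hT1
      linarith [hT1]
    have hlb := hmono T hT0
    nlinarith [hT2]
  have hc0 : c = 0 := le_antisymm hcle hcge
  -- pointwise identity w'^2 = k w^2
  have hsq : ∀ t ∈ Ici (0:ℝ), w' t * w' t = k * (w t * w t) := by
    intro t ht
    have hq := hQconst t ht
    simp only [hQdef] at hq
    rw [hc0] at hq
    linarith
  -- P ≤ 0 everywhere
  have hPnonpos : ∀ t ∈ Ici (0:ℝ), P t ≤ 0 := by
    intro t₀ ht₀
    by_contra hp
    push_neg at hp
    have hmonoP : ∀ T, t₀ ≤ T → P t₀ ≤ P T := by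
      intro T hT
      have hm : MonotoneOn P (Icc t₀ T) := by
        apply monoIcc (f' := fun t => w' t * w' t + k * (w t * w t))
        · intro t htm
          exact hPd t (le_trans ht₀ htm.1)
        · intro t _
          have := add_nonneg (mul_self_nonneg (w' t)) (mul_nonneg hk.le (mul_self_nonneg (w t)))
          linarith
      exact hm ⟨le_refl t₀, hT⟩ ⟨hT, le_refl T⟩ hT
    have hw4 : Tendsto (fun T => k * ((w T * w T) * (w T * w T))) atTop (nhds 0) := by
      simpa using (hwsq.mul hwsq).const_mul k
    have hev := hw4.eventually_lt_const (mul_pos hp hp)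
    obtain ⟨T, hT1, hT2⟩ := (hev.and (eventually_ge_atTop t₀)).exists
    have hTmem : T ∈ Ici (0:ℝ) := le_trans ht₀ hT2
    have hqq := hsq T hTmem
    have hPP : k * ((w T * w T) * (w T * w T)) = P T * P T := by
      simp only [hPdef]
      linear_combination (-(w T * w T)) * hqq
    have hPT := hmonoP T hT2
    nlinarith [hT1, hp, hPT]
  -- vertex: P 0 = 0 hence w 0 = 0
  have hP0 : P 0 = 0 := le_antisymm (hPnonpos 0 Set.self_mem_Ici) h0
  have hA : w 0 * w' 0 = 0 := hP0
  have hB := hsq 0 Set.self_mem_Ici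
  have h1 : k * ((w 0 * w 0) * (w 0 * w 0)) = 0 := by
    linear_combination (w 0 * w' 0) * hA - (w 0 * w 0) * hB
  have h2 : (w 0 * w 0) * (w 0 * w 0) = 0 := by
    rcases mul_eq_zero.mp h1 with h | h
    · exact absurd h hk.ne'
    · exact h
  have hw0 : w 0 = 0 := mul_self_eq_zero.mp (mul_self_eq_zero.mp h2)
  -- w^2 is antitone (derivative 2P ≤ 0), starts at 0, and is ≥ 0
  intro t ht
  have hanti : MonotoneOn (fun s => -(w s * w s)) (Icc 0 t) := by
    apply monoIcc (f' := fun s => -(2 * P s))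
    · intro s hs
      have : HasDerivAt (fun r => -(w r * w r)) _ s := ((hd1 s hs.1).fun_mul (hd1 s hs.1)).fun_neg
      convert this using 1
      simp only [hPdef]
      ring
    · intro s hs
      have := hPnonpos s hs.1
      linarith
  have h4 : -(w 0 * w 0) ≤ -(w t * w t) := hanti ⟨le_refl 0, ht⟩ ⟨ht, le_refl t⟩ ht
  rw [hw0] at h4
  simp at h4
  have h3 : w t * w t = 0 := le_antisymm h4 (mul_self_nonneg (w t))
  exact mul_self_eq_zero.mp h3


/-- energy/uniqueness on a finite metric graph for λ < λ₀.
The graph has N₁ bounded edges (parametrized by [0, L e]) and N₂ unbounded edges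
(parametrized by [0,∞)); ς solves −ε²ς'' = (λ−λ₀)ς on each edge, decays at infinity
on infinite edges, and at every edge endpoint (vertex) the corresponding component
satisfies a Dirichlet (ς = 0) or Neumann (ς' = 0) condition, or a Robin condition
ε ∂_out ς + a ς = 0 with a ≥ 0 (∂_out the outward derivative). Then ς ≡ 0. -/
theorem stmt13 {N₁ N₂ : ℕ} (ε lam lam0 : ℝ) (hε : 0 < ε) (hlt : lam < lam0)
    (L : Fin N₁ → ℝ) (hL : ∀ e, 0 < L e)
    (u u' u'' : Fin N₁ → ℝ → ℝ) (w w' w'' : Fin N₂ → ℝ → ℝ)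
    (hu1 : ∀ e, ∀ t ∈ Set.Icc 0 (L e), HasDerivAt (u e) (u' e t) t)
    (hu2 : ∀ e, ∀ t ∈ Set.Icc 0 (L e), HasDerivAt (u' e) (u'' e t) t)
    (huode : ∀ e, ∀ t ∈ Set.Icc 0 (L e), -(ε^2) * u'' e t = (lam - lam0) * u e t)
    (hw1 : ∀ e, ∀ t ∈ Set.Ici (0 : ℝ), HasDerivAt (w e) (w' e t) t)
    (hw2 : ∀ e, ∀ t ∈ Set.Ici (0 : ℝ), HasDerivAt (w' e) (w'' e t) t)
    (hwode : ∀ e, ∀ t ∈ Set.Ici (0 : ℝ), -(ε^2) * w'' e t = (lam - lam0) * w e t)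
    (hwdecay : ∀ e, Filter.Tendsto (w e) Filter.atTop (nhds 0))
    -- vertex conditions at the left endpoint t = 0 of bounded edges
    (hu0 : ∀ e, u e 0 = 0 ∨ u' e 0 = 0 ∨
        ∃ a : ℝ, 0 ≤ a ∧ ε * (-(u' e 0)) + a * u e 0 = 0)
    -- vertex conditions at the right endpoint t = L e of bounded edges
    (huL : ∀ e, u e (L e) = 0 ∨ u' e (L e) = 0 ∨
        ∃ a : ℝ, 0 ≤ a ∧ ε * (u' e (L e)) + a * u e (L e) = 0)
    -- vertex conditions at the endpoint t = 0 of unbounded edges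
    (hw0 : ∀ e, w e 0 = 0 ∨ w' e 0 = 0 ∨
        ∃ a : ℝ, 0 ≤ a ∧ ε * (-(w' e 0)) + a * w e 0 = 0) :
    (∀ e, ∀ t ∈ Set.Icc 0 (L e), u e t = 0) ∧
    (∀ e, ∀ t ∈ Set.Ici (0 : ℝ), w e t = 0) := by
  set k := (lam0 - lam) / ε ^ 2 with hkdef
  have hε2 : (0:ℝ) < ε ^ 2 := by positivity
  have hk : 0 < k := div_pos (by linarith) hε2
  constructor
  · intro e
    apply boundedEdge hk (hL e) (hu1 e)
    · intro t ht
      have h2 : u'' e t = k * u e t := by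
        rw [hkdef]
        field_simp
        linarith [huode e t ht]
      exact h2 ▸ hu2 e t ht
    · rcases hu0 e with h | h | ⟨a, ha, hrob⟩
      · rw [h]; simp
      · rw [h]; simp
      · exact robin_sign0 hε ha hrob
    · rcases huL e with h | h | ⟨a, ha, hrob⟩
      · rw [h]; simp
      · rw [h]; simp
      · exact robin_signL hε ha hrob
  · intro e
    apply infEdge hk (hw1 e) ?_ (hwdecay e)
    · rcases hw0 e with h | h | ⟨a, ha, hrob⟩
      · rw [h]; simp
      · rw [h]; simp
      · exact robin_sign0 hε ha hrob
    · intro t ht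
      have h2 : w'' e t = k * w e t := by
        rw [hkdef]
        field_simp
        linarith [hwode e t ht]
      exact h2 ▸ hw2 e t ht
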